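/- Let a(t) = a₀/(1+t) with a₀ > 0 and let u(t) solve u' = −u + (T + a(t)I)^{-1} A* f, u(0) = u₀, where f = A y, y ⟂ ker A, A bounded linear on a Hilbert space, T = A*A. Then lim_{t→∞} u(t) = y. -/

import Mathlib

open ContinuousLinearMap Filter

local notation "⟪" x ", " y "⟫" => @inner ℝ _ _ x y

lemma aux_dense {H : Type*} [NormedAddCommGroup H] [InnerProductSpace ℝ H] [CompleteSpace H]
    (A : H →L[ℝ] H) {y : H} (hy : y ∈ (LinearMap.ker (A : H →ₗ[ℝ] H))ᗮ) {ε : ℝ} (hε : 0 < ε) :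
    ∃ z : H, ‖y - adjoint A z‖ < ε := by
  have hker : (LinearMap.ker (A : H →ₗ[ℝ] H) : Submodule ℝ H) = (LinearMap.range ((adjoint A : H →L[ℝ] H) : H →ₗ[ℝ] H))ᗮ := by
    ext x
    simp only [LinearMap.mem_ker, Submodule.mem_orthogonal]
    constructor
    · rintro hx u hu
      obtain ⟨z, rfl⟩ := LinearMap.mem_range.mp hu
      rw [show (((adjoint A : H →L[ℝ] H) : H →ₗ[ℝ] H) z : H) = adjoint A z from rfl]
      rw [adjoint_inner_left, show (A x : H) = 0 from hx, inner_zero_right]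
    · intro h
      have := h (adjoint A (A x)) (LinearMap.mem_range.mpr ⟨A x, rfl⟩)
      rw [adjoint_inner_left] at this
      exact inner_self_eq_zero.mp this
  rw [hker, Submodule.orthogonal_orthogonal_eq_closure] at hy
  have hy' : y ∈ closure ((LinearMap.range ((adjoint A : H →L[ℝ] H) : H →ₗ[ℝ] H) : Submodule ℝ H) : Set H) := hy
  obtain ⟨b, hb, hdist⟩ := Metric.mem_closure_iff.mp hy' ε hε
  obtain ⟨z, rfl⟩ := LinearMap.mem_range.mp hb
  exact ⟨z, by rwa [dist_eq_norm] at hdist⟩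

lemma key_identity {H : Type*} [NormedAddCommGroup H] [InnerProductSpace ℝ H] [CompleteSpace H]
    (A : H →L[ℝ] H) (y : H) {a : ℝ} {w : H}
    (hw : (adjoint A).comp A w + a • w = adjoint A (A y)) :
    ‖A (w - y)‖ ^ 2 + a * ‖w - y‖ ^ 2 + a * ⟪y, w - y⟫ = 0 := by
  have h0 : adjoint A (A (w - y)) + a • w = 0 := by
    have : adjoint A (A (w - y)) = (adjoint A).comp A w - adjoint A (A y) := by
      simp [map_sub]
    rw [this]
    rw [← hw]; abel
  have h1 : ⟪adjoint A (A (w - y)) + a • w, w - y⟫ = (0 : ℝ) := by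
    rw [h0, inner_zero_left]
  rw [inner_add_left, real_inner_smul_left, adjoint_inner_left,
    real_inner_self_eq_norm_sq] at h1
  have hw' : ⟪w, w - y⟫ = ⟪w - y, w - y⟫ + ⟪y, w - y⟫ := by
    rw [← inner_add_left]; congr 1; abel
  rw [hw', real_inner_self_eq_norm_sq] at h1
  linarith

set_option maxHeartbeats 1000000 in
lemma v_tendsto {H : Type*} [NormedAddCommGroup H] [InnerProductSpace ℝ H] [CompleteSpace H]
    (A : H →L[ℝ] H) (y : H) (hy : y ∈ (LinearMap.ker (A : H →ₗ[ℝ] H))ᗮ)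
    (a₀ : ℝ) (ha₀ : 0 < a₀) (v : ℝ → H)
    (hv : ∀ t ≥ (0:ℝ),
      (adjoint A).comp A (v t) + (a₀ / (1 + t)) • v t = adjoint A (A y)) :
    Tendsto (fun t => v t - y) atTop (nhds 0) := by
  rw [NormedAddCommGroup.tendsto_nhds_zero]
  intro ε hε
  obtain ⟨z, hz⟩ := aux_dense A hy (show (0:ℝ) < ε^2/(2*(‖y‖+1)) by positivity)
  have hat : Tendsto (fun t : ℝ => a₀ / (1 + t)) atTop (nhds 0) := by
    have h1 : Tendsto (fun t : ℝ => 1 + t) atTop atTop :=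
      tendsto_atTop_add_const_left _ 1 tendsto_id
    simpa [div_eq_mul_inv] using h1.inv_tendsto_atTop.const_mul a₀
  have hsq : Tendsto (fun t : ℝ => (‖z‖+1) * (Real.sqrt (a₀/(1+t)) * ‖y‖)) atTop (nhds 0) := by
    have h2 := (Real.continuous_sqrt.tendsto' 0 0 Real.sqrt_zero).comp hat
    simpa using (h2.mul_const ‖y‖).const_mul (‖z‖+1)
  filter_upwards [hsq.eventually_lt_const (show (0:ℝ) < ε^2/2 by positivity),
    eventually_ge_atTop (0:ℝ)] with t hg ht
  set a : ℝ := a₀ / (1 + t) with ha_def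
  have ha : 0 < a := by positivity
  have key0 := key_identity A y (hv t ht)
  set e : H := v t - y with he_def
  have key : ‖A e‖ ^ 2 + a * ‖e‖ ^ 2 + a * ⟪y, e⟫ = 0 := by
    rw [ha_def]; exact key0
  have hAe2 : ‖A e‖ ^ 2 ≥ 0 := sq_nonneg _
  -- ‖e‖² ≤ -⟪y, e⟫
  have h1 : ‖e‖ ^ 2 ≤ -⟪y, e⟫ := by
    have h1' : a * ‖e‖ ^ 2 ≤ a * (-⟪y, e⟫) := by linarith
    exact le_of_mul_le_mul_left h1' ha
  have hcs : -⟪y, e⟫ ≤ ‖y‖ * ‖e‖ := by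
    have := real_inner_le_norm y (-e)
    simpa [inner_neg_right] using this
  have he_le : ‖e‖ ≤ ‖y‖ := by nlinarith [norm_nonneg e, norm_nonneg y]
  -- ‖A e‖ ≤ √a * ‖y‖
  have hstep : -⟪y, e⟫ ≤ ‖y‖ ^ 2 :=
    le_trans hcs (by nlinarith [norm_nonneg e, norm_nonneg y])
  have hAe_sq : ‖A e‖ ^ 2 ≤ a * ‖y‖ ^ 2 := by
    have hp1 := mul_nonneg ha.le (sq_nonneg ‖e‖)
    have hp2 := mul_le_mul_of_nonneg_left hstep ha.le
    nlinarith
  have hAe : ‖A e‖ ≤ Real.sqrt a * ‖y‖ := by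
    nlinarith [Real.sq_sqrt ha.le, Real.sqrt_nonneg a, norm_nonneg (A e), norm_nonneg y,
      mul_nonneg (Real.sqrt_nonneg a) (norm_nonneg y)]
  -- split -⟪y,e⟫
  have hsplit : -⟪y, e⟫ = ⟪y - adjoint A z, -e⟫ + ⟪z, A (-e)⟫ := by
    rw [← adjoint_inner_left, ← inner_add_left, sub_add_cancel, inner_neg_right]
  have hb1 : ⟪y - adjoint A z, -e⟫ ≤ ε^2/(2*(‖y‖+1)) * ‖y‖ := by
    have := real_inner_le_norm (y - adjoint A z) (-e)
    have hne : ‖-e‖ = ‖e‖ := norm_neg e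
    nlinarith [norm_nonneg (y - adjoint A z), norm_nonneg e]
  have hb2 : ⟪z, A (-e)⟫ ≤ ‖z‖ * ‖A e‖ := by
    have := real_inner_le_norm z (A (-e))
    have : ⟪z, A (-e)⟫ ≤ ‖z‖ * ‖A (-e)‖ := this
    simpa [map_neg, norm_neg] using this
  have hzAe : ‖z‖ * ‖A e‖ ≤ (‖z‖+1) * (Real.sqrt a * ‖y‖) := by
    have h0 : (0:ℝ) ≤ Real.sqrt a * ‖y‖ := mul_nonneg (Real.sqrt_nonneg a) (norm_nonneg y)
    calc ‖z‖ * ‖A e‖ ≤ ‖z‖ * (Real.sqrt a * ‖y‖) :=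
          mul_le_mul_of_nonneg_left hAe (norm_nonneg z)
      _ ≤ (‖z‖+1) * (Real.sqrt a * ‖y‖) :=
          mul_le_mul_of_nonneg_right (by linarith [norm_nonneg z]) h0
  have hy1 : ε^2/(2*(‖y‖+1)) * ‖y‖ ≤ ε^2/2 := by
    have hpos : (0:ℝ) < ‖y‖ + 1 := by positivity
    have hstep2 : ε^2/(2*(‖y‖+1)) * ‖y‖ ≤ ε^2/(2*(‖y‖+1)) * (‖y‖+1) :=
      mul_le_mul_of_nonneg_left (by linarith) (by positivity)
    have heq : ε^2/(2*(‖y‖+1)) * (‖y‖+1) = ε^2/2 := by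
      field_simp
    linarith [hstep2, heq.le]
  have hfin : ‖e‖ ^ 2 < ε ^ 2 := by
    calc ‖e‖ ^ 2 ≤ -⟪y, e⟫ := h1
      _ = ⟪y - adjoint A z, -e⟫ + ⟪z, A (-e)⟫ := hsplit
      _ ≤ ε^2/2 + (‖z‖+1) * (Real.sqrt a * ‖y‖) := by
          have := le_trans hb2 hzAe; linarith [le_trans hb1 hy1]
      _ < ε^2/2 + ε^2/2 := by linarith
      _ = ε^2 := by ring
  nlinarith [norm_nonneg e]

theorem dsm_convergence
    {H : Type*} [NormedAddCommGroup H] [InnerProductSpace ℝ H] [CompleteSpace H]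
    (A : H →L[ℝ] H) (y : H) (hy : y ∈ (LinearMap.ker (A : H →ₗ[ℝ] H))ᗮ)
    (a₀ : ℝ) (ha₀ : 0 < a₀)
    (v : ℝ → H)
    (hv : ∀ t ≥ (0:ℝ),
      (adjoint A).comp A (v t) + (a₀ / (1 + t)) • v t = adjoint A (A y))
    (u : ℝ → H) (u₀ : H) (hu0 : u 0 = u₀)
    (hODE : ∀ t ≥ (0:ℝ), HasDerivAt u (-(u t) + v t) t) :
    Tendsto u atTop (nhds y) := by
  have hvt := v_tendsto A y hy a₀ ha₀ v hv
  rw [tendsto_iff_norm_sub_tendsto_zero, NormedAddCommGroup.tendsto_nhds_zero]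
  intro ε hε
  set δ : ℝ := ε / 2 with hδ_def
  have hδ : 0 < δ := by positivity
  -- choose T₁ ≥ 0 with ‖v t - y‖ ≤ δ for t ≥ T₁
  have hev : ∀ᶠ t in atTop, ‖v t - y‖ < δ ∧ (0:ℝ) ≤ t := by
    filter_upwards [NormedAddCommGroup.tendsto_nhds_zero.mp hvt δ hδ,
      eventually_ge_atTop (0:ℝ)] with t h1 h2 using ⟨h1, h2⟩
  obtain ⟨T₀, hT₀⟩ := eventually_atTop.mp hev
  set T₁ : ℝ := max T₀ 0 with hT₁_def
  have hT₁0 : (0:ℝ) ≤ T₁ := le_max_right _ _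
  have hT₁ : ∀ b ≥ T₁, ‖v b - y‖ < δ ∧ (0:ℝ) ≤ b :=
    fun b hb => hT₀ b (le_trans (le_max_left _ _) hb)
  -- h t = ‖u t - y‖²  as inner product
  set h : ℝ → ℝ := fun t => ⟪u t - y, u t - y⟫ with hh_def
  have hnorm : ∀ t, h t = ‖u t - y‖ ^ 2 := fun t => real_inner_self_eq_norm_sq _
  set φ : ℝ → ℝ := fun t => Real.exp t * (h t - δ ^ 2) with hφ_def
  have hφ' : ∀ t ≥ (0:ℝ), HasDerivAt φ
      (Real.exp t * (h t - δ ^ 2) +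
        Real.exp t * (⟪u t - y, -(u t) + v t⟫ + ⟪-(u t) + v t, u t - y⟫)) t := by
    intro t ht
    have hu' : HasDerivAt (fun s => u s - y) (-(u t) + v t) t := (hODE t ht).sub_const y
    have hh' : HasDerivAt h (⟪u t - y, -(u t) + v t⟫ + ⟪-(u t) + v t, u t - y⟫) t :=
      HasDerivAt.inner ℝ hu' hu'
    exact (Real.hasDerivAt_exp t).mul (hh'.sub_const (δ ^ 2))
  -- φ antitone on Ici T₁
  have hanti : AntitoneOn φ (Set.Ici T₁) := by
    apply antitoneOn_of_deriv_nonpos (convex_Ici T₁)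
    · intro t ht
      exact (hφ' t (le_trans hT₁0 ht)).continuousAt.continuousWithinAt
    · intro t ht
      rw [interior_Ici] at ht
      exact (hφ' t (le_trans hT₁0 (le_of_lt ht))).differentiableAt.differentiableWithinAt
    · intro t ht
      rw [interior_Ici] at ht
      have ht' : T₁ ≤ t := le_of_lt ht
      rw [(hφ' t (le_trans hT₁0 ht')).deriv]
      have hvb : ‖v t - y‖ < δ := (hT₁ t ht').1
      have hDsymm : ⟪u t - y, -(u t) + v t⟫ + ⟪-(u t) + v t, u t - y⟫
          = 2 * ⟪u t - y, -(u t) + v t⟫ := by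
        rw [real_inner_comm (-(u t) + v t) (u t - y)]; ring
      have hsplit : (-(u t) + v t : H) = -(u t - y) + (v t - y) := by abel
      have hval : ⟪u t - y, -(u t) + v t⟫ = -h t + ⟪u t - y, v t - y⟫ := by
        rw [hsplit, inner_add_right, inner_neg_right]
      have hcs : ⟪u t - y, v t - y⟫ ≤ ‖u t - y‖ * δ := by
        have := real_inner_le_norm (u t - y) (v t - y)
        nlinarith [norm_nonneg (u t - y)]
      have hAM : 2 * (‖u t - y‖ * δ) ≤ h t + δ ^ 2 := by
        rw [hnorm]; nlinarith [sq_nonneg (‖u t - y‖ - δ)]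
      have hexp : 0 < Real.exp t := Real.exp_pos t
      rw [hDsymm, hval]
      nlinarith
  -- for t ≥ T₁ : h t ≤ δ² + exp (T₁ - t) * (h T₁ - δ²)
  have hbound : ∀ t ≥ T₁, h t ≤ δ ^ 2 + Real.exp (T₁ - t) * (h T₁ - δ ^ 2) := by
    intro t ht
    have := hanti (Set.self_mem_Ici) (Set.mem_Ici.mpr ht) ht
    have hexp : 0 < Real.exp t := Real.exp_pos t
    have : h t - δ ^ 2 ≤ Real.exp (T₁ - t) * (h T₁ - δ ^ 2) := by
      rw [Real.exp_sub, div_mul_eq_mul_div, le_div_iff₀ hexp]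
      calc (h t - δ ^ 2) * Real.exp t = φ t := by rw [hφ_def]; ring
        _ ≤ φ T₁ := this
        _ = Real.exp T₁ * (h T₁ - δ ^ 2) := rfl
    linarith
  -- second term tends to 0
  have htail : Tendsto (fun t => Real.exp (T₁ - t) * (h T₁ - δ ^ 2)) atTop (nhds 0) := by
    have h1 : Tendsto (fun t : ℝ => T₁ - t) atTop atBot := by
      have := tendsto_atBot_add_const_left atTop T₁ (tendsto_neg_atTop_atBot (G := ℝ))
      simpa [sub_eq_add_neg] using this
    simpa using (Real.tendsto_exp_atBot.comp h1).mul_const (h T₁ - δ ^ 2)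
  filter_upwards [htail.eventually_lt_const (show (0:ℝ) < δ ^ 2 by positivity),
    eventually_ge_atTop T₁] with t h1 h2
  have hb := hbound t h2
  have : h t < 2 * δ ^ 2 := by linarith
  rw [hnorm] at this
  have hεδ : 2 * δ ^ 2 < ε ^ 2 := by rw [hδ_def]; nlinarith
  rw [Real.norm_eq_abs, abs_of_nonneg (norm_nonneg _)]
  nlinarith [norm_nonneg (u t - y)]
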